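/- Fix 0 < β < 1, λ ≥ 1, κ > π > 0, d_h > Q, and weights w_1, w_2 > 0. If w_2 π^β > λ w_1 (κ-π)^β · (1 + κ(d_h - Q)/((κ-π)(Q - d_l)))^{β-1}, then the seller's PT utility U(q) = -λ w_1 ((κ-π)q + κ(d_h-Q))^β + w_2 (π q)^β is strictly increasing on (0, Q - d_l), so its maximum over [0, Q - d_l] is attained at q = Q - d_l. -/

import Mathlib

/-- If the boundary condition holds, the seller's PT utility with high reference
point is strictly increasing on (0, Q - d_l), so maximized at q = Q - d_l. -/
theorem seller_high_ref_corner (β lam κ π Q dl dh w1 w2 : ℝ)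
    (hβ0 : 0 < β) (hβ1 : β < 1) (hlam : 1 ≤ lam)
    (hπ : 0 < π) (hκ : π < κ) (hdl : dl < Q) (hdh : Q < dh)
    (hw1 : 0 < w1) (hw2 : 0 < w2)
    (hcond : lam * w1 * (κ - π) ^ β *
        (1 + κ * (dh - Q) / ((κ - π) * (Q - dl))) ^ (β - 1) < w2 * π ^ β)
    (U : ℝ → ℝ)
    (hU : ∀ q : ℝ, U q =
      -lam * w1 * ((κ - π) * q + κ * (dh - Q)) ^ β + w2 * (π * q) ^ β) :
    StrictMonoOn U (Set.Ioo 0 (Q - dl)) ∧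
      ∀ q ∈ Set.Icc (0:ℝ) (Q - dl), U q ≤ U (Q - dl) := by
  have hUeq : U = fun q => -lam * w1 * ((κ - π) * q + κ * (dh - Q)) ^ β + w2 * (π * q) ^ β :=
    funext hU
  subst hUeq
  set a := Q - dl with ha_def
  set k := κ - π with hk_def
  set c := κ * (dh - Q) with hc_def
  have ha : 0 < a := by simp [ha_def]; linarith
  have hk : 0 < k := by simp [hk_def]; linarith
  have hc : 0 < c := mul_pos (hπ.trans hκ) (by linarith)
  have hlamw1 : 0 < lam * w1 := by positivity
  -- continuity of rpow
  have hco : Continuous fun x : ℝ => x ^ β :=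
    continuous_iff_continuousAt.mpr fun x => Real.continuousAt_rpow_const x β (Or.inr hβ0.le)
  have hcontU : Continuous fun q : ℝ => -lam * w1 * (k * q + c) ^ β + w2 * (π * q) ^ β := by
    exact (continuous_const.mul (hco.comp ((continuous_const.mul continuous_id).add
      continuous_const))).add (continuous_const.mul (hco.comp (continuous_const.mul continuous_id)))
  have key : StrictMonoOn (fun q : ℝ => -lam * w1 * (k * q + c) ^ β + w2 * (π * q) ^ β)
      (Set.Icc 0 a) := by
    apply strictMonoOn_of_deriv_pos (convex_Icc _ _) hcontU.continuousOn
    intro q hq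
    rw [interior_Icc] at hq
    obtain ⟨hq0, hqa⟩ := hq
    have hkqc : 0 < k * q + c := by positivity
    have hπq : 0 < π * q := by positivity
    have h1 : HasDerivAt (fun q : ℝ => k * q + c) k q := by
      simpa using ((hasDerivAt_id q).const_mul k).add_const c
    have h2 : HasDerivAt (fun q : ℝ => π * q) π q := by
      simpa using (hasDerivAt_id q).const_mul π
    have hd1 : HasDerivAt (fun q : ℝ => (k * q + c) ^ β)
        (β * (k * q + c) ^ (β - 1) * k) q :=
      by have h := (Real.hasDerivAt_rpow_const (p := β) (Or.inl hkqc.ne')).comp q h1; exact h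
    have hd2 : HasDerivAt (fun q : ℝ => (π * q) ^ β)
        (β * (π * q) ^ (β - 1) * π) q :=
      (Real.hasDerivAt_rpow_const (Or.inl hπq.ne')).comp q h2
    have hD : HasDerivAt (fun q : ℝ => -lam * w1 * (k * q + c) ^ β + w2 * (π * q) ^ β)
        (-lam * w1 * (β * (k * q + c) ^ (β - 1) * k) + w2 * (β * (π * q) ^ (β - 1) * π)) q :=
      (hd1.const_mul (-lam * w1)).add (hd2.const_mul w2)
    rw [hD.deriv]
    -- now show positivity of the derivative
    have hq1 : 0 < 1 + c / (k * q) := by positivity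
    have ha1 : 0 < 1 + c / (k * a) := by positivity
    have e1 : (k * q + c) ^ (β - 1) = k ^ (β - 1) * q ^ (β - 1) * (1 + c / (k * q)) ^ (β - 1) := by
      have h : k * q + c = k * q * (1 + c / (k * q)) := by field_simp
      rw [h, Real.mul_rpow (by positivity) (by positivity),
        Real.mul_rpow hk.le hq0.le]
    have e2 : (π * q) ^ (β - 1) = π ^ (β - 1) * q ^ (β - 1) := Real.mul_rpow hπ.le hq0.le
    have hmono : (1 + c / (k * q)) ^ (β - 1) ≤ (1 + c / (k * a)) ^ (β - 1) := by
      apply Real.rpow_le_rpow_of_nonpos ha1 _ (by linarith)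
      gcongr
    have hkβ : k ^ (β - 1) * k = k ^ β := by
      rw [← Real.rpow_add_one hk.ne']; ring_nf
    have hπβ : π ^ (β - 1) * π = π ^ β := by
      rw [← Real.rpow_add_one hπ.ne']; ring_nf
    have hqpos : 0 < q ^ (β - 1) := Real.rpow_pos_of_pos hq0 _
    have hstep : lam * w1 * k ^ β * (1 + c / (k * q)) ^ (β - 1) < w2 * π ^ β := by
      calc lam * w1 * k ^ β * (1 + c / (k * q)) ^ (β - 1)
          ≤ lam * w1 * k ^ β * (1 + c / (k * a)) ^ (β - 1) := by
            gcongr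
        _ < w2 * π ^ β := hcond
    have hfinal : lam * w1 * (β * (k * q + c) ^ (β - 1) * k)
        < w2 * (β * (π * q) ^ (β - 1) * π) := by
      rw [e1, e2]
      have lhs_eq : lam * w1 * (β * (k ^ (β - 1) * q ^ (β - 1) * (1 + c / (k * q)) ^ (β - 1)) * k)
          = β * q ^ (β - 1) * (lam * w1 * k ^ β * (1 + c / (k * q)) ^ (β - 1)) := by
        rw [← hkβ]; ring
      have rhs_eq : w2 * (β * (π ^ (β - 1) * q ^ (β - 1)) * π)
          = β * q ^ (β - 1) * (w2 * π ^ β) := by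
        rw [← hπβ]; ring
      rw [lhs_eq, rhs_eq]
      have : 0 < β * q ^ (β - 1) := by positivity
      exact mul_lt_mul_of_pos_left hstep this
    linarith
  refine ⟨key.mono (Set.Ioo_subset_Icc_self), fun q hq => ?_⟩
  rcases eq_or_lt_of_le hq.2 with h | h
  · rw [h]
  · exact (key hq (Set.right_mem_Icc.mpr (by linarith)) h).le
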